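/- Any minimizer Â of the nuclear-norm-penalized least squares criterion A ↦ ‖Y − XA‖² + λ∑_k σ_k(A) over all p×T matrices satisfies Π Â = Â, where Π is the orthogonal projection onto the range of X^T; consequently Â is also a minimizer of the same criterion restricted to matrices whose column space (range) is contained in range(X^T). -/

import Mathlib

open Matrix BigOperators

/-- Negated unsorted singular values of `M` (square roots of eigenvalues of `Mᴴ * M`). -/
noncomputable def negSvalsUnsorted {m n : ℕ} (M : Matrix (Fin m) (Fin n) ℝ) : Fin n → ℝ :=
  fun i => - Real.sqrt ((Matrix.isHermitian_conjTranspose_mul_self M).eigenvalues i)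

/-- The `k`-th largest singular value of `M` (`k` is 0-indexed, so `svals M 0 = σ₁(M)`). -/
noncomputable def svals {m n : ℕ} (M : Matrix (Fin m) (Fin n) ℝ) : Fin n → ℝ :=
  fun k => - negSvalsUnsorted M (Tuple.sort (negSvalsUnsorted M) k)

/-- The nuclear norm of `M`: sum of the singular values. -/
noncomputable def nucNorm {m n : ℕ} (M : Matrix (Fin m) (Fin n) ℝ) : ℝ := ∑ k, svals M k

/-- The Frobenius (Hilbert–Schmidt) norm of `M`. -/
noncomputable def frobNorm {m n : ℕ} (M : Matrix (Fin m) (Fin n) ℝ) : ℝ :=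
  Real.sqrt (∑ i, ∑ j, (M i j)^2)

namespace Matrix.PosSemidef

/-- Old-style PSD square root (ported helper). -/
noncomputable def sqrt {N : Type*} [Fintype N] [DecidableEq N] {A : Matrix N N ℝ}
    (hA : A.PosSemidef) : Matrix N N ℝ :=
  (hA.1.eigenvectorUnitary : Matrix N N ℝ) * diagonal (fun i => Real.sqrt (hA.1.eigenvalues i)) *
    (star hA.1.eigenvectorUnitary : Matrix N N ℝ)

lemma posSemidef_sqrt {N : Type*} [Fintype N] [DecidableEq N] {A : Matrix N N ℝ}
    (hA : A.PosSemidef) : hA.sqrt.PosSemidef := by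
  unfold sqrt
  have hd : (diagonal (fun i => Real.sqrt (hA.1.eigenvalues i))).PosSemidef :=
    PosSemidef.diagonal (fun i => Real.sqrt_nonneg _)
  rw [star_eq_conjTranspose]
  exact hd.mul_mul_conjTranspose_same _

lemma sqrt_mul_self {N : Type*} [Fintype N] [DecidableEq N] {A : Matrix N N ℝ}
    (hA : A.PosSemidef) : hA.sqrt * hA.sqrt = A := by
  unfold sqrt
  have hUU : (star hA.1.eigenvectorUnitary : Matrix N N ℝ) * (hA.1.eigenvectorUnitary : Matrix N N ℝ) = 1 :=
    Unitary.coe_star_mul_self _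
  conv_rhs => rw [hA.1.spectral_theorem, Unitary.conjStarAlgAut_apply]
  calc _ = (hA.1.eigenvectorUnitary : Matrix N N ℝ) * (diagonal (fun i => Real.sqrt (hA.1.eigenvalues i)) *
        ((star hA.1.eigenvectorUnitary : Matrix N N ℝ) * (hA.1.eigenvectorUnitary : Matrix N N ℝ)) *
        diagonal (fun i => Real.sqrt (hA.1.eigenvalues i))) * (star hA.1.eigenvectorUnitary : Matrix N N ℝ) := by
        simp only [Matrix.mul_assoc]
    _ = _ := by
      rw [hUU, Matrix.mul_one, diagonal_mul_diagonal]
      congr 2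
      ext i j
      by_cases h : i = j <;> simp [diagonal_apply, h, Real.mul_self_sqrt (hA.eigenvalues_nonneg j)]

end Matrix.PosSemidef

/-- Operator monotonicity of the matrix square root for real PSD matrices. -/
lemma psd_sqrt_mono {N : Type*} [Fintype N] [DecidableEq N] {A B : Matrix N N ℝ}
    (hA : A.PosSemidef) (hB : B.PosSemidef) (hAB : (B - A).PosSemidef) :
    (hB.sqrt - hA.sqrt).PosSemidef := by
  have hS := hA.posSemidef_sqrt
  have hT := hB.posSemidef_sqrt
  set S := hA.sqrt with hSdef
  set T := hB.sqrt with hTdef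
  have hD : (T - S).IsHermitian := hT.1.sub hS.1
  by_contra hcon
  obtain ⟨i, hi⟩ : ∃ i, hD.eigenvalues i < 0 := by
    by_contra h
    push_neg at h
    exact hcon (hD.posSemidef_iff_eigenvalues_nonneg.mpr h)
  set t := hD.eigenvalues i with htdef
  set v : N → ℝ := ⇑(hD.eigenvectorBasis i) with hvdef
  have hv : v ≠ 0 := by
    have h0 := hD.eigenvectorBasis.orthonormal.ne_zero i
    intro h
    exact h0 (by ext j; exact congrFun h j)
  have hDv : (T - S) *ᵥ v = t • v := hD.mulVec_eigenvectorBasis i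
  have key : B - A = T * (T - S) + (T - S) * S := by
    rw [mul_sub, sub_mul, hB.sqrt_mul_self, hA.sqrt_mul_self]
    abel
  have hsymmD : (T - S)ᵀ = T - S := by
    have h2 := hD
    rwa [Matrix.IsHermitian, conjTranspose_eq_transpose_of_trivial] at h2
  have e1 : v ⬝ᵥ (B - A) *ᵥ v = t * (v ⬝ᵥ T *ᵥ v + v ⬝ᵥ S *ᵥ v) := by
    rw [key, add_mulVec, dotProduct_add, ← mulVec_mulVec, hDv, mulVec_smul, dotProduct_smul,
      ← mulVec_mulVec, dotProduct_mulVec v (T - S), ← hsymmD, vecMul_transpose, hDv]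
    simp [smul_dotProduct, smul_eq_mul]
    ring
  have hBA : 0 ≤ v ⬝ᵥ (B - A) *ᵥ v := by simpa using hAB.dotProduct_mulVec_nonneg v
  have hTv : 0 ≤ v ⬝ᵥ T *ᵥ v := by simpa using hT.dotProduct_mulVec_nonneg v
  have hSv : 0 ≤ v ⬝ᵥ S *ᵥ v := by simpa using hS.dotProduct_mulVec_nonneg v
  have hsum : v ⬝ᵥ T *ᵥ v + v ⬝ᵥ S *ᵥ v = 0 := by
    nlinarith [e1, hBA, hTv, hSv, hi]
  have hTv0 : v ⬝ᵥ T *ᵥ v = 0 := by linarith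
  have hSv0 : v ⬝ᵥ S *ᵥ v = 0 := by linarith
  have hz : v ⬝ᵥ (T - S) *ᵥ v = 0 := by
    rw [sub_mulVec, dotProduct_sub, hTv0, hSv0, sub_zero]
  rw [hDv, dotProduct_smul, smul_eq_mul] at hz
  have hvv : v ⬝ᵥ v ≠ 0 := by
    intro h
    exact hv ((dotProduct_self_eq_zero).mp h)
  exact hvv (by
    rcases mul_eq_zero.mp hz with h | h
    · exact absurd h (ne_of_lt hi)
    · exact h)

/-- Trace of the PSD square root is the sum of square roots of eigenvalues. -/
lemma trace_psd_sqrt {N : Type*} [Fintype N] [DecidableEq N] {C : Matrix N N ℝ}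
    (hC : C.PosSemidef) : hC.sqrt.trace = ∑ i, Real.sqrt (hC.1.eigenvalues i) := by
  rw [Matrix.PosSemidef.sqrt, Matrix.trace_mul_cycle, Unitary.coe_star_mul_self, one_mul,
    Matrix.trace_diagonal]

/-- The nuclear norm equals the trace of the square root of `Mᴴ * M`. -/
lemma nucNorm_eq_trace_sqrt {m n : ℕ} (M : Matrix (Fin m) (Fin n) ℝ) :
    nucNorm M = (Matrix.posSemidef_conjTranspose_mul_self M).sqrt.trace := by
  rw [trace_psd_sqrt]
  rw [nucNorm]
  unfold svals
  rw [Equiv.sum_comp (Tuple.sort (negSvalsUnsorted M)) (fun i => - negSvalsUnsorted M i)]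
  simp [negSvalsUnsorted]

/-- A PSD matrix with zero trace is zero. -/
lemma psd_trace_zero {N : Type*} [Fintype N] [DecidableEq N] {D : Matrix N N ℝ}
    (hD : D.PosSemidef) (h : D.trace = 0) : D = 0 := by
  have h1 : D = hD.sqrt.conjTranspose * hD.sqrt := by
    rw [hD.posSemidef_sqrt.1, hD.sqrt_mul_self]
  have h2 : (hD.sqrtᴴ * hD.sqrt).trace = ∑ i, ∑ j, (hD.sqrt i j)^2 := by
    simp [Matrix.trace, Matrix.diag, Matrix.mul_apply, sq]
    rw [Finset.sum_comm]
  rw [h1, h2] at h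
  have hs : hD.sqrt = 0 := by
    ext i j
    have hrow := Finset.sum_eq_zero_iff_of_nonneg
      (fun i _ => Finset.sum_nonneg (fun j _ => sq_nonneg (hD.sqrt i j))) |>.mp h i
      (Finset.mem_univ i)
    have hent := Finset.sum_eq_zero_iff_of_nonneg
      (fun j _ => sq_nonneg (hD.sqrt i j)) |>.mp hrow j (Finset.mem_univ j)
    exact pow_eq_zero_iff (by norm_num) |>.mp hent
  rw [h1, hs]
  simp

lemma psd_trace_nonneg {N : Type*} [Fintype N] [DecidableEq N] {D : Matrix N N ℝ}
    (hD : D.PosSemidef) : 0 ≤ D.trace := by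
  apply Finset.sum_nonneg
  intro i _
  simpa using hD.dotProduct_mulVec_nonneg (Pi.single i 1)

lemma mul_proj_eq {n p : ℕ} (X : Matrix (Fin n) (Fin p) ℝ) (Pr : Matrix (Fin p) (Fin p) ℝ)
    (hidem : Pr * Pr = Pr) (hsymm : Pr.IsSymm)
    (hrange : LinearMap.range Pr.mulVecLin = LinearMap.range Xᵀ.mulVecLin) :
    X * Pr = X := by
  have h1 : Pr * Xᵀ = Xᵀ := by
    ext i j
    have hc : (fun k => Xᵀ k j) ∈ LinearMap.range Pr.mulVecLin := by
      rw [hrange]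
      exact ⟨Pi.single j 1, by ext k; simp [Matrix.mulVecLin_apply, Matrix.mulVec_single]⟩
    obtain ⟨w, hw⟩ := hc
    have hfix : Pr *ᵥ (fun k => Xᵀ k j) = (fun k => Xᵀ k j) := by
      rw [← hw]
      simp only [Matrix.mulVecLin_apply, Matrix.mulVec_mulVec, hidem]
    calc (Pr * Xᵀ) i j = (Pr *ᵥ (fun k => Xᵀ k j)) i := by
          simp [Matrix.mul_apply, Matrix.mulVec, dotProduct]
    _ = Xᵀ i j := by rw [hfix]
  have h2 := congrArg Matrix.transpose h1
  rwa [Matrix.transpose_mul, Matrix.transpose_transpose, hsymm.eq] at h2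

/-- Any minimizer `Â` of `A ↦ ‖Y − XA‖² + λ ∑_k σ_k(A)` over all `p×T` matrices
satisfies `Pr Â = Â`, where `Pr` is the orthogonal projection onto `range Xᵀ`; consequently `Â`
also minimizes the criterion over matrices whose column space is contained in `range Xᵀ`. -/
theorem minimizer_fixed_by_proj {n p T : ℕ} (Y : Matrix (Fin n) (Fin T) ℝ)
    (X : Matrix (Fin n) (Fin p) ℝ) (lam : ℝ) (hlam : 0 < lam)
    (Pr : Matrix (Fin p) (Fin p) ℝ) (hidem : Pr * Pr = Pr) (hsymm : Pr.IsSymm)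
    (hrange : LinearMap.range Pr.mulVecLin = LinearMap.range Xᵀ.mulVecLin)
    (Ahat : Matrix (Fin p) (Fin T) ℝ)
    (hmin : ∀ A : Matrix (Fin p) (Fin T) ℝ,
      frobNorm (Y - X * Ahat) ^ 2 + lam * nucNorm Ahat ≤
        frobNorm (Y - X * A) ^ 2 + lam * nucNorm A) :
    Pr * Ahat = Ahat ∧
    ∀ A : Matrix (Fin p) (Fin T) ℝ,
      LinearMap.range A.mulVecLin ≤ LinearMap.range Xᵀ.mulVecLin →
      frobNorm (Y - X * Ahat) ^ 2 + lam * nucNorm Ahat ≤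
        frobNorm (Y - X * A) ^ 2 + lam * nucNorm A := by
  refine ⟨?_, fun A _ => hmin A⟩
  have hXP : X * Pr = X := mul_proj_eq X Pr hidem hsymm hrange
  have hXPA : X * (Pr * Ahat) = X * Ahat := by rw [← Matrix.mul_assoc, hXP]
  -- from minimality: nucNorm Ahat ≤ nucNorm (Pr * Ahat)
  have hnuc : nucNorm Ahat ≤ nucNorm (Pr * Ahat) := by
    have := hmin (Pr * Ahat)
    rw [hXPA] at this
    have hlam' := le_of_add_le_add_left this
    exact le_of_mul_le_mul_left hlam' hlam
  -- PSD matrices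
  have hPrh : Prᴴ = Pr := by
    rw [conjTranspose_eq_transpose_of_trivial, hsymm.eq]
  set B := (Pr * Ahat)ᴴ * (Pr * Ahat) with hBdef
  set C := Ahatᴴ * Ahat with hCdef
  have hB : B.PosSemidef := Matrix.posSemidef_conjTranspose_mul_self _
  have hC : C.PosSemidef := Matrix.posSemidef_conjTranspose_mul_self _
  have hPAh : (Pr * Ahat)ᴴ = Ahatᴴ * Pr := by rw [conjTranspose_mul, hPrh]
  have hQ : (Ahatᴴ * Pr) * (Pr * Ahat) = Ahatᴴ * (Pr * Ahat) := by
    rw [Matrix.mul_assoc, ← Matrix.mul_assoc Pr Pr Ahat, hidem]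
  have key : C - B = (Ahat - Pr * Ahat)ᴴ * (Ahat - Pr * Ahat) := by
    rw [hCdef, hBdef, hPAh, hQ, conjTranspose_sub, hPAh, Matrix.sub_mul, Matrix.mul_sub,
      Matrix.mul_sub, hQ, Matrix.mul_assoc Ahatᴴ Pr Ahat]
    abel
  have hdiff : (C - B).PosSemidef := by
    rw [key]
    exact Matrix.posSemidef_conjTranspose_mul_self _
  have hsq : (hC.sqrt - hB.sqrt).PosSemidef := psd_sqrt_mono hB hC hdiff
  -- trace comparison
  have htr1 : hC.sqrt.trace ≤ hB.sqrt.trace := by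
    have e1 : nucNorm Ahat = hC.sqrt.trace := nucNorm_eq_trace_sqrt Ahat
    have e2 : nucNorm (Pr * Ahat) = hB.sqrt.trace := nucNorm_eq_trace_sqrt (Pr * Ahat)
    rw [e1, e2] at hnuc
    exact hnuc
  have htr0 : (hC.sqrt - hB.sqrt).trace = 0 := by
    rw [Matrix.trace_sub]
    have := psd_trace_nonneg hsq
    rw [Matrix.trace_sub] at this
    linarith
  have hsqeq : hC.sqrt = hB.sqrt := by
    have := psd_trace_zero hsq htr0
    have h0 := sub_eq_zero.mp this
    exact h0
  have hCB : C = B := by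
    rw [← hC.sqrt_mul_self, ← hB.sqrt_mul_self, hsqeq]
  have hz : (Ahat - Pr * Ahat)ᴴ * (Ahat - Pr * Ahat) = 0 := by
    rw [← key, hCB, sub_self]
  have := Matrix.conjTranspose_mul_self_eq_zero.mp hz
  have h0 := sub_eq_zero.mp this
  exact h0.symm
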